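/- Let x ∈ Ω, τ > 0, Δ > 0 with τ√n ≤ Δ, and let A be the forward finite-difference Jacobian approximation of F at x with stepsize τ. Then for every d ∈ ℝⁿ with ‖d‖_p ≤ Δ and x + d ∈ Ω, one has h(F(x+d)) − h(F(x) + Ad) ≤ L_{h,p} L_J c_{p,2}(m) c_{2,p}(n)² Δ². -/

import Mathlib

open scoped ENNReal

noncomputable section

/-- The `p`-norm on `ℝ^n`, for `p ∈ [1,∞]`. -/
def pNorm (p : ℝ≥0∞) {n : ℕ} (x : Fin n → ℝ) : ℝ :=
  if p = ∞ then ⨆ i, |x i| else (∑ i, |x i| ^ p.toReal) ^ (1 / p.toReal)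

/-- The Euclidean norm on `ℝ^n`. -/
def eucNorm {n : ℕ} (x : Fin n → ℝ) : ℝ := Real.sqrt (∑ i, x i ^ 2)

/-- The operator norm of a matrix, induced by Euclidean norms. -/
def opNorm2 {m n : ℕ} (A : Matrix (Fin m) (Fin n) ℝ) : ℝ :=
  sSup ((fun v => eucNorm (A.mulVec v)) '' {v | eucNorm v ≤ 1})

/-- Forward finite-difference approximation of the Jacobian of `F` at `x` with stepsize `τ`:
the `j`-th column is `(F (x + τ e_j) - F x) / τ`. -/
def fdMatrix {n m : ℕ} (F : (Fin n → ℝ) → (Fin m → ℝ)) (x : Fin n → ℝ) (τ : ℝ) :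
    Matrix (Fin m) (Fin n) ℝ :=
  Matrix.of fun i j => (F (x + Pi.single j τ) i - F x i) / τ

/-- Stationarity measure `ψ_{p,r}(x)`. -/
def psi {n m : ℕ} (Ω : Set (Fin n → ℝ)) (F : (Fin n → ℝ) → (Fin m → ℝ))
    (h : (Fin m → ℝ) → ℝ) (J : (Fin n → ℝ) → Matrix (Fin m) (Fin n) ℝ)
    (p : ℝ≥0∞) (r : ℝ) (x : Fin n → ℝ) : ℝ :=
  r⁻¹ * (h (F x) -
    sInf ((fun s => h (F x + (J x).mulVec s)) '' {s | x + s ∈ Ω ∧ pNorm p s ≤ r}))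

/-- Approximate stationarity measure `η_{p,r}(x; A)`. -/
def eta {n m : ℕ} (Ω : Set (Fin n → ℝ)) (F : (Fin n → ℝ) → (Fin m → ℝ))
    (h : (Fin m → ℝ) → ℝ) (p : ℝ≥0∞) (r : ℝ) (x : Fin n → ℝ)
    (A : Matrix (Fin m) (Fin n) ℝ) : ℝ :=
  r⁻¹ * (h (F x) -
    sInf ((fun s => h (F x + A.mulVec s)) '' {s | x + s ∈ Ω ∧ pNorm p s ≤ r}))

namespace Stmt7Aux

/-- identification with Euclidean space -/
def toE {n : ℕ} (v : Fin n → ℝ) : EuclideanSpace ℝ (Fin n) :=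
  (WithLp.linearEquiv 2 ℝ (Fin n → ℝ)).symm v

@[simp] lemma toE_apply {n : ℕ} (v : Fin n → ℝ) (i : Fin n) : toE v i = v i := rfl

lemma toE_add {n : ℕ} (a b : Fin n → ℝ) : toE (a + b) = toE a + toE b := rfl
lemma toE_sub {n : ℕ} (a b : Fin n → ℝ) : toE (a - b) = toE a - toE b := rfl
lemma toE_smul {n : ℕ} (c : ℝ) (a : Fin n → ℝ) : toE (c • a) = c • toE a := rfl

lemma eucNorm_eq {n : ℕ} (v : Fin n → ℝ) : eucNorm v = ‖toE v‖ := by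
  rw [EuclideanSpace.norm_eq]
  simp [eucNorm, sq_abs]

lemma eucNorm_nonneg {n : ℕ} (v : Fin n → ℝ) : 0 ≤ eucNorm v := Real.sqrt_nonneg _

lemma eucNorm_smul {n : ℕ} (c : ℝ) (v : Fin n → ℝ) :
    eucNorm (c • v) = |c| * eucNorm v := by
  rw [eucNorm_eq, eucNorm_eq, toE_smul, norm_smul, Real.norm_eq_abs]

lemma eucNorm_ofE {n : ℕ} (w : EuclideanSpace ℝ (Fin n)) :
    eucNorm ((WithLp.equiv 2 (Fin n → ℝ)) w) = ‖w‖ := eucNorm_eq _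

end Stmt7Aux

namespace Stmt7Aux

/-- matrix as continuous linear map between Euclidean spaces -/
def matCLM {m n : ℕ} (A : Matrix (Fin m) (Fin n) ℝ) :
    EuclideanSpace ℝ (Fin n) →L[ℝ] EuclideanSpace ℝ (Fin m) :=
  (((EuclideanSpace.equiv (Fin m) ℝ).symm : (Fin m → ℝ) →L[ℝ] EuclideanSpace ℝ (Fin m)).comp
    (LinearMap.toContinuousLinearMap A.mulVecLin)).comp
      ((EuclideanSpace.equiv (Fin n) ℝ) : EuclideanSpace ℝ (Fin n) →L[ℝ] (Fin n → ℝ))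

lemma matCLM_apply {m n : ℕ} (A : Matrix (Fin m) (Fin n) ℝ) (w : EuclideanSpace ℝ (Fin n)) :
    matCLM A w = toE (A.mulVec ((WithLp.equiv 2 (Fin n → ℝ)) w)) := rfl

lemma matCLM_toE {m n : ℕ} (A : Matrix (Fin m) (Fin n) ℝ) (v : Fin n → ℝ) :
    matCLM A (toE v) = toE (A.mulVec v) := rfl

lemma opNorm2_nonneg {m n : ℕ} (A : Matrix (Fin m) (Fin n) ℝ) : 0 ≤ opNorm2 A :=
  Real.sSup_nonneg (by rintro x ⟨v, -, rfl⟩; exact eucNorm_nonneg _)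

lemma bddAbove_opSet {m n : ℕ} (A : Matrix (Fin m) (Fin n) ℝ) :
    BddAbove ((fun v => eucNorm (A.mulVec v)) '' {v | eucNorm v ≤ 1}) := by
  refine ⟨‖matCLM A‖, ?_⟩
  rintro r ⟨v, hv, rfl⟩
  have h1 : eucNorm (A.mulVec v) = ‖matCLM A (toE v)‖ := by rw [matCLM_toE, eucNorm_eq]
  have h2 : ‖matCLM A (toE v)‖ ≤ ‖matCLM A‖ * ‖toE v‖ := (matCLM A).le_opNorm _
  have h3 : ‖toE v‖ ≤ 1 := by rw [← eucNorm_eq]; exact hv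
  calc eucNorm (A.mulVec v) ≤ ‖matCLM A‖ * ‖toE v‖ := h1 ▸ h2
    _ ≤ ‖matCLM A‖ * 1 := by
        have := (matCLM A).opNorm_nonneg
        nlinarith
    _ = ‖matCLM A‖ := mul_one _

lemma eucNorm_mulVec_le {m n : ℕ} (A : Matrix (Fin m) (Fin n) ℝ) (v : Fin n → ℝ) :
    eucNorm (A.mulVec v) ≤ opNorm2 A * eucNorm v := by
  rcases eq_or_ne v 0 with rfl | hv
  · simp [Matrix.mulVec_zero, eucNorm, Real.sqrt_zero]
  · have hc : 0 < eucNorm v := by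
      rw [eucNorm_eq]
      have : toE v ≠ 0 := by
        intro hz
        apply hv
        funext i
        have := congrArg (fun w : EuclideanSpace ℝ (Fin n) => w i) hz
        simpa using this
      exact norm_pos_iff.mpr this
    set c := eucNorm v with hcdef
    set u := c⁻¹ • v with hu
    have hun : eucNorm u = 1 := by
      rw [hu, eucNorm_smul, abs_of_pos (inv_pos.mpr hc)]
      field_simp
      exact hcdef.symm
    have hvc : v = c • u := by
      rw [hu, smul_smul, mul_inv_cancel₀ (ne_of_gt hc), one_smul]
    have : eucNorm (A.mulVec v) = c * eucNorm (A.mulVec u) := by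
      conv_lhs => rw [hvc, Matrix.mulVec_smul, eucNorm_smul, abs_of_pos hc]
    rw [this]
    have hle : eucNorm (A.mulVec u) ≤ opNorm2 A :=
      le_csSup (bddAbove_opSet A) ⟨u, by simp [hun], rfl⟩
    calc c * eucNorm (A.mulVec u) ≤ c * opNorm2 A := by nlinarith
      _ = opNorm2 A * c := mul_comm _ _

lemma norm_matCLM_sub_le {m n : ℕ} (M N : Matrix (Fin m) (Fin n) ℝ) :
    ‖matCLM M - matCLM N‖ ≤ opNorm2 (M - N) := by
  refine ContinuousLinearMap.opNorm_le_bound _ (opNorm2_nonneg _) fun w => ?_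
  have hw : w = toE ((WithLp.equiv 2 (Fin n → ℝ)) w) := rfl
  set v := (WithLp.equiv 2 (Fin n → ℝ)) w with hv
  have h1 : (matCLM M - matCLM N) w = toE ((M - N).mulVec v) := by
    rw [ContinuousLinearMap.sub_apply, hw, matCLM_toE, matCLM_toE, ← toE_sub,
      Matrix.sub_mulVec]
  rw [h1, ← eucNorm_eq]
  have := eucNorm_mulVec_le (M - N) v
  rwa [show eucNorm v = ‖w‖ from eucNorm_ofE w] at this

end Stmt7Aux

namespace Stmt7Aux

lemma taylor_bound {n m : ℕ}
    (F : (Fin n → ℝ) → (Fin m → ℝ)) (J : (Fin n → ℝ) → Matrix (Fin m) (Fin n) ℝ)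
    (hJ : ∀ y, HasFDerivAt F (LinearMap.toContinuousLinearMap (Matrix.mulVecLin (J y))) y)
    (LJ : ℝ) (hLJ : 0 ≤ LJ)
    (hJLip : ∀ y z, opNorm2 (J y - J z) ≤ LJ * eucNorm (y - z))
    (y v : Fin n → ℝ) :
    eucNorm (F (y + v) - F y - (J y).mulVec v) ≤ LJ / 2 * eucNorm v ^ 2 := by
  classical
  set en := (EuclideanSpace.equiv (Fin n) ℝ)
  set em := (EuclideanSpace.equiv (Fin m) ℝ)
  set g : EuclideanSpace ℝ (Fin n) → EuclideanSpace ℝ (Fin m) :=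
    fun w => toE (F (en w)) with hgdef
  have hg : ∀ w, HasFDerivAt g (matCLM (J (en w))) w := by
    intro w
    have h1 : HasFDerivAt (fun w : EuclideanSpace ℝ (Fin n) => F (en w))
        ((LinearMap.toContinuousLinearMap (Matrix.mulVecLin (J (en w)))).comp
          (en : EuclideanSpace ℝ (Fin n) →L[ℝ] (Fin n → ℝ))) w :=
      (hJ (en w)).comp w en.hasFDerivAt
    have h2 := (em.symm.hasFDerivAt (x := F (en w))).comp w h1
    exact h2.congr_fderiv (ContinuousLinearMap.ext fun u => rfl)
  set x0 : EuclideanSpace ℝ (Fin n) := toE y with hx0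
  set dE : EuclideanSpace ℝ (Fin n) := toE v with hdE
  set cvec : EuclideanSpace ℝ (Fin m) := matCLM (J y) dE with hcvec
  set f : ℝ → EuclideanSpace ℝ (Fin m) :=
    fun t => g (x0 + t • dE) - g x0 - t • cvec with hfdef
  set f' : ℝ → EuclideanSpace ℝ (Fin m) :=
    fun t => matCLM (J (en (x0 + t • dE))) dE - cvec with hf'def
  have hderiv : ∀ t : ℝ, HasDerivAt f (f' t) t := by
    intro t
    have hc : HasDerivAt (fun t : ℝ => x0 + t • dE) dE t := by
      simpa using ((hasDerivAt_id t).smul_const dE).const_add x0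
    have h1 : HasDerivAt (fun t : ℝ => g (x0 + t • dE))
        (matCLM (J (en (x0 + t • dE))) dE) t := by
      exact (hg (x0 + t • dE)).comp_hasDerivAt t hc
    have h2 : HasDerivAt (fun t : ℝ => t • cvec) cvec t := by
      simpa using (hasDerivAt_id t).smul_const cvec
    exact (h1.sub_const (g x0)).sub h2
  have key : ∀ t ∈ Set.Ico (0:ℝ) 1, ‖f' t‖ ≤ (LJ * ‖dE‖ ^ 2) * t := by
    intro t ht
    have heq : en (x0 + t • dE) - y = t • v := by
      funext i; simp [x0, dE, en]
    have hlip : ‖matCLM (J (en (x0 + t • dE))) - matCLM (J y)‖ ≤ LJ * (t * ‖dE‖) := by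
      refine (norm_matCLM_sub_le _ _).trans ?_
      refine (hJLip _ _).trans ?_
      rw [heq, eucNorm_smul, abs_of_nonneg ht.1, eucNorm_eq, ← hdE]
    have hft : f' t = (matCLM (J (en (x0 + t • dE))) - matCLM (J y)) dE := by
      simp [f', cvec]
    rw [hft]
    calc ‖(matCLM (J (en (x0 + t • dE))) - matCLM (J y)) dE‖
        ≤ ‖matCLM (J (en (x0 + t • dE))) - matCLM (J y)‖ * ‖dE‖ :=
          ContinuousLinearMap.le_opNorm _ _
      _ ≤ (LJ * (t * ‖dE‖)) * ‖dE‖ :=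
          mul_le_mul_of_nonneg_right hlip (norm_nonneg dE)
      _ = (LJ * ‖dE‖ ^ 2) * t := by ring
  set B : ℝ → ℝ := fun t => (LJ / 2 * ‖dE‖ ^ 2) * t ^ 2 with hB
  have hB' : ∀ t : ℝ, HasDerivAt B ((LJ * ‖dE‖ ^ 2) * t) t := by
    intro t
    have := (hasDerivAt_pow 2 t).const_mul (LJ / 2 * ‖dE‖ ^ 2)
    exact this.congr_deriv (by ring)
  have hmain := image_norm_le_of_norm_deriv_right_le_deriv_boundary
    (f := f) (f' := f') (a := 0) (b := 1)
    (fun t _ => (hderiv t).continuousAt.continuousWithinAt)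
    (fun t _ => (hderiv t).hasDerivWithinAt)
    (by simp [f, B])
    hB' key
  have h1 := hmain (Set.right_mem_Icc.mpr zero_le_one)
  have hf1 : f 1 = toE (F (y + v) - F y - (J y).mulVec v) := by
    have e1 : en (x0 + (1:ℝ) • dE) = y + v := by funext i; simp [en, x0, dE]
    calc f 1 = toE (F (en (x0 + (1:ℝ) • dE))) - toE (F (en x0)) - (1:ℝ) • cvec := rfl
      _ = toE (F (y + v)) - toE (F y) - toE ((J y).mulVec v) := by
          rw [e1, one_smul]; rfl
      _ = toE (F (y + v) - F y - (J y).mulVec v) := by rw [toE_sub, toE_sub]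
  rw [hf1, ← eucNorm_eq] at h1
  have hdEn : ‖dE‖ = eucNorm v := (eucNorm_eq v).symm
  simpa [B, hdEn] using h1

end Stmt7Aux

namespace Stmt7Aux

lemma eucNorm_single {n : ℕ} (j : Fin n) (c : ℝ) :
    eucNorm (Pi.single j c) = |c| := by
  unfold eucNorm
  have hs : ∑ i, (Pi.single j c : Fin n → ℝ) i ^ 2 = c ^ 2 := by
    rw [Finset.sum_eq_single j]
    · simp
    · intro i _ hij; simp [Pi.single_apply, hij]
    · simp
  rw [hs, Real.sqrt_sq_eq_abs]

lemma eucNorm_mulVec_le_sum {m n : ℕ} (M : Matrix (Fin m) (Fin n) ℝ) (d : Fin n → ℝ) :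
    eucNorm (M.mulVec d) ≤ ∑ j, |d j| * eucNorm (fun i => M i j) := by
  have hdec : M.mulVec d = ∑ j, d j • (fun i => M i j) := by
    funext i
    simp [Matrix.mulVec, dotProduct, Finset.sum_apply, mul_comm]
  rw [hdec, eucNorm_eq]
  have htoE : toE (∑ j, d j • (fun i => M i j)) = ∑ j, d j • toE (fun i => M i j) := by
    simp only [toE, map_sum, map_smul]
  rw [htoE]
  refine (norm_sum_le _ _).trans ?_
  refine Finset.sum_le_sum fun j _ => ?_
  rw [norm_smul, Real.norm_eq_abs, ← eucNorm_eq]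

lemma sum_abs_le_sqrt {n : ℕ} (d : Fin n → ℝ) :
    ∑ j, |d j| ≤ Real.sqrt n * eucNorm d := by
  have h1 : (∑ j, |d j|) ^ 2 ≤ (n : ℝ) * ∑ j, d j ^ 2 := by
    have := sq_sum_le_card_mul_sum_sq (s := (Finset.univ : Finset (Fin n)))
      (f := fun j => |d j|)
    simpa [sq_abs] using this
  have h2 : ∑ j, |d j| = Real.sqrt ((∑ j, |d j|) ^ 2) :=
    (Real.sqrt_sq (Finset.sum_nonneg fun j _ => abs_nonneg _)).symm
  rw [h2]
  calc Real.sqrt ((∑ j, |d j|) ^ 2) ≤ Real.sqrt ((n : ℝ) * ∑ j, d j ^ 2) :=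
        Real.sqrt_le_sqrt h1
    _ = Real.sqrt n * eucNorm d := by
        rw [Real.sqrt_mul (by positivity)]; rfl


lemma eucNorm_sub_le {n : ℕ} (a b : Fin n → ℝ) :
    eucNorm (a - b) ≤ eucNorm a + eucNorm b := by
  rw [eucNorm_eq, eucNorm_eq, eucNorm_eq, toE_sub]
  exact norm_sub_le _ _

end Stmt7Aux

set_option maxHeartbeats 1000000 in
/-- key estimate in Lemma 3.2: model error bound at trial points. -/
theorem stmt7
    {n m : ℕ} (hn : 1 ≤ n) (hm : 1 ≤ m) (p : ℝ≥0∞) (hp : 1 ≤ p)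
    (Ω : Set (Fin n → ℝ)) (hΩne : Ω.Nonempty) (hΩcl : IsClosed Ω) (hΩcv : Convex ℝ Ω)
    (F : (Fin n → ℝ) → (Fin m → ℝ)) (J : (Fin n → ℝ) → Matrix (Fin m) (Fin n) ℝ)
    (hJ : ∀ y, HasFDerivAt F (LinearMap.toContinuousLinearMap (Matrix.mulVecLin (J y))) y)
    (LJ : ℝ) (hLJ : 0 < LJ)
    (hJLip : ∀ y z, opNorm2 (J y - J z) ≤ LJ * eucNorm (y - z))
    (h : (Fin m → ℝ) → ℝ) (hconv : ConvexOn ℝ Set.univ h)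
    (Lh : ℝ) (hLh : 0 < Lh)
    (hhLip : ∀ z w, |h z - h w| ≤ Lh * pNorm p (z - w))
    (cnp cpm : ℝ) (hcnp1 : 1 ≤ cnp) (hcpm1 : 1 ≤ cpm)
    (hcnp : ∀ v : Fin n → ℝ, eucNorm v ≤ cnp * pNorm p v)
    (hcpm : ∀ z : Fin m → ℝ, pNorm p z ≤ cpm * eucNorm z)
    (x : Fin n → ℝ) (hx : x ∈ Ω) (τ Δ : ℝ) (hτ : 0 < τ) (hΔ : 0 < Δ)
    (hτΔ : τ * Real.sqrt n ≤ Δ) :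
    ∀ d : Fin n → ℝ, pNorm p d ≤ Δ → x + d ∈ Ω →
      h (F (x + d)) - h (F x + (fdMatrix F x τ).mulVec d) ≤
        Lh * LJ * cpm * cnp ^ 2 * Δ ^ 2 := by
  intro d hd hxd
  have hLJ' : (0:ℝ) ≤ LJ := hLJ.le
  have hτ0 : τ ≠ 0 := ne_of_gt hτ
  set A := fdMatrix F x τ with hA
  -- column bound
  have hcol : ∀ j : Fin n, eucNorm (fun i => (A - J x) i j) ≤ LJ * τ / 2 := by
    intro j
    have htb := Stmt7Aux.taylor_bound F J hJ LJ hLJ' hJLip x (Pi.single j τ)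
    have hsingle : eucNorm (Pi.single j τ : Fin n → ℝ) = τ := by
      rw [Stmt7Aux.eucNorm_single, abs_of_pos hτ]
    rw [hsingle] at htb
    have hcol_eq : (fun i => (A - J x) i j)
        = τ⁻¹ • (F (x + Pi.single j τ) - F x - (J x).mulVec (Pi.single j τ)) := by
      funext i
      simp only [hA, Matrix.sub_apply, fdMatrix, Matrix.of_apply, Pi.smul_apply,
        Pi.sub_apply, Matrix.mulVec_single, smul_eq_mul, Matrix.col_apply, op_smul_eq_mul]
      field_simp
    rw [hcol_eq, Stmt7Aux.eucNorm_smul, abs_of_pos (inv_pos.mpr hτ)]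
    have h2 := mul_le_mul_of_nonneg_left htb (inv_pos.mpr hτ).le
    have h3 : τ⁻¹ * (LJ / 2 * τ ^ 2) = LJ * τ / 2 := by
      field_simp
    linarith [h2, h3]
  -- second term
  set q := eucNorm d with hqdef
  have hq0 : 0 ≤ q := Stmt7Aux.eucNorm_nonneg d
  have hterm2 : eucNorm (A.mulVec d - (J x).mulVec d)
      ≤ LJ * τ / 2 * (Real.sqrt n * q) := by
    rw [(Matrix.sub_mulVec A (J x) d).symm]
    calc eucNorm ((A - J x).mulVec d)
        ≤ ∑ j, |d j| * eucNorm (fun i => (A - J x) i j) :=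
          Stmt7Aux.eucNorm_mulVec_le_sum _ _
      _ ≤ ∑ j, |d j| * (LJ * τ / 2) :=
          Finset.sum_le_sum fun j _ =>
            mul_le_mul_of_nonneg_left (hcol j) (abs_nonneg _)
      _ = (∑ j, |d j|) * (LJ * τ / 2) := by rw [Finset.sum_mul]
      _ ≤ (Real.sqrt n * q) * (LJ * τ / 2) :=
          mul_le_mul_of_nonneg_right (Stmt7Aux.sum_abs_le_sqrt d) (by positivity)
      _ = LJ * τ / 2 * (Real.sqrt n * q) := mul_comm _ _
  -- first term
  have hterm1 : eucNorm (F (x + d) - F x - (J x).mulVec d) ≤ LJ / 2 * q ^ 2 :=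
    Stmt7Aux.taylor_bound F J hJ LJ hLJ' hJLip x d
  -- split
  have hsplit : F (x + d) - (F x + A.mulVec d)
      = (F (x + d) - F x - (J x).mulVec d) - (A.mulVec d - (J x).mulVec d) := by
    funext i
    simp only [Pi.sub_apply, Pi.add_apply]
    ring
  have hcnp0 : (0:ℝ) ≤ cnp := le_trans zero_le_one hcnp1
  have hqΔ : q ≤ cnp * Δ :=
    le_trans (hcnp d) (mul_le_mul_of_nonneg_left hd hcnp0)
  have hsqn : (0:ℝ) ≤ Real.sqrt n := Real.sqrt_nonneg _
  have s1 : τ * Real.sqrt n * q ≤ Δ * (cnp * Δ) :=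
    mul_le_mul hτΔ hqΔ hq0 hΔ.le
  have s2 : q ^ 2 ≤ (cnp * Δ) ^ 2 := by nlinarith
  have hEtot : eucNorm (F (x + d) - (F x + A.mulVec d)) ≤ LJ * cnp ^ 2 * Δ ^ 2 := by
    calc eucNorm (F (x + d) - (F x + A.mulVec d))
        = eucNorm ((F (x + d) - F x - (J x).mulVec d) - (A.mulVec d - (J x).mulVec d)) := by
          rw [hsplit]
      _ ≤ eucNorm (F (x + d) - F x - (J x).mulVec d)
            + eucNorm (A.mulVec d - (J x).mulVec d) := Stmt7Aux.eucNorm_sub_le _ _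
      _ ≤ LJ / 2 * q ^ 2 + LJ * τ / 2 * (Real.sqrt n * q) := add_le_add hterm1 hterm2
      _ ≤ LJ * cnp ^ 2 * Δ ^ 2 := by
          have a1 : LJ / 2 * q ^ 2 ≤ LJ / 2 * (cnp * Δ) ^ 2 :=
            mul_le_mul_of_nonneg_left s2 (by positivity)
          have a2 : LJ / 2 * (τ * Real.sqrt n * q) ≤ LJ / 2 * (Δ * (cnp * Δ)) :=
            mul_le_mul_of_nonneg_left s1 (by positivity)
          have h3 : 0 ≤ LJ * Δ ^ 2 * (cnp * (cnp - 1)) :=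
            mul_nonneg (by positivity) (mul_nonneg hcnp0 (by linarith))
          nlinarith [a1, a2, h3]
  have hcpm0 : (0:ℝ) ≤ cpm := le_trans zero_le_one hcpm1
  calc h (F (x + d)) - h (F x + A.mulVec d)
      ≤ Lh * pNorm p (F (x + d) - (F x + A.mulVec d)) :=
        (le_abs_self _).trans (hhLip _ _)
    _ ≤ Lh * (cpm * eucNorm (F (x + d) - (F x + A.mulVec d))) :=
        mul_le_mul_of_nonneg_left (hcpm _) hLh.le
    _ ≤ Lh * (cpm * (LJ * cnp ^ 2 * Δ ^ 2)) :=
        mul_le_mul_of_nonneg_left (mul_le_mul_of_nonneg_left hEtot hcpm0) hLh.le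
    _ = Lh * LJ * cpm * cnp ^ 2 * Δ ^ 2 := by ring
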